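/- arXiv:2408.06171 — 2 statements merged into one kernel-verified Lean document; each statement's English description precedes it below -/
import Mathlib

section
/- Let Γ be a simple graph. If the core CΓ of Γ is a rigid graph, then Γ is rigid. -/
/-- `linkSet G S` is the link of a set `S` of vertices in the simple graph `G`:
the set of vertices adjacent to every vertex of `S`.  (For `S = ∅` this is all of `V`.) -/
def linkSet {V : Type*} (G : SimpleGraph V) (S : Set V) : Set V :=
  {w | ∀ v ∈ S, G.Adj v w}

/-- A simple graph is *rigid* if `Link(Link(v)) = {v}` for every vertex `v`. -/
def IsRigid {V : Type*} (G : SimpleGraph V) : Prop :=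
  ∀ v : V, linkSet G (linkSet G {v}) = {v}

/-- The *star* of a vertex `v` in a simple graph `G`: `{v} ∪ Link(v)`. -/
def starSet {V : Type*} (G : SimpleGraph V) (v : V) : Set V :=
  insert v (G.neighborSet v)

/-- The *core equivalence* on the vertices of a simple graph: `v ≈ w` iff
`Star(v) = Star(w)`. -/
def coreSetoid {V : Type*} (G : SimpleGraph V) : Setoid V where
  r v w := starSet G v = starSet G w
  iseqv := ⟨fun _ => rfl, Eq.symm, Eq.trans⟩

/-- The *core* of a simple graph `G`: the simple graph whose vertices are the core
equivalence classes of `G`, with two distinct classes adjacent iff some (equivalently,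
any) representatives are adjacent in `G`. -/
def coreGraph {V : Type*} (G : SimpleGraph V) :
    SimpleGraph (Quotient (coreSetoid G)) where
  Adj c d := c ≠ d ∧ ∃ v w : V,
    Quotient.mk (coreSetoid G) v = c ∧ Quotient.mk (coreSetoid G) w = d ∧ G.Adj v w
  symm := ⟨by
    rintro c d ⟨hne, v, w, hv, hw, h⟩
    exact ⟨hne.symm, w, v, hw, hv, h.symm⟩⟩
  loopless := ⟨fun c h => h.1 rfl⟩

/-- **If the core of a graph is rigid, then the graph is rigid.** -/
theorem isRigid_of_isRigid_coreGraph {V : Type*} (Γ : SimpleGraph V)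
    (h : IsRigid (coreGraph Γ)) : IsRigid Γ := by
  intro v
  ext u
  simp only [linkSet, Set.mem_setOf_eq, Set.mem_singleton_iff]
  constructor
  · intro hu
    have hlink : ∀ x, Γ.Adj v x → Γ.Adj x u := by
      intro x hx
      exact hu x (fun y hy => by subst hy; exact hx)
    set Q := Quotient.mk (coreSetoid Γ) with hQ
    -- transfer adjacency along core equivalence
    have congr : ∀ a b c : V, starSet Γ a = starSet Γ b → Γ.Adj a c → c ≠ b → Γ.Adj b c := by
      intro a b c hst hadj hne
      have : c ∈ starSet Γ a := Set.mem_insert_iff.2 (Or.inr hadj)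
      rw [hst] at this
      rcases Set.mem_insert_iff.1 this with rfl | h2
      · exact absurd rfl hne
      · exact h2
    -- If Qu were adjacent to Qv in the core, contradiction
    have hnotadj : ¬ (coreGraph Γ).Adj (Q v) (Q u) := by
      rintro ⟨hne, a, b, ha, hb, hab⟩
      have hav : starSet Γ a = starSet Γ v := Quotient.exact ha
      have hbu : starSet Γ b = starSet Γ u := Quotient.exact hb
      have hbv : b ≠ v := fun hbv => hne (hbv ▸ hb)
      have hvb : Γ.Adj v b := congr a v b hav hab hbv
      have hvu : v ≠ u := fun hvu => hne (by rw [hvu])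
      have huv : Γ.Adj u v := congr b u v hbu hvb.symm hvu
      exact Γ.loopless.irrefl u (hlink u huv.symm)
    -- Qu ∈ Link(Link(Qv)) in the core
    have hsub : Q u ∈ linkSet (coreGraph Γ) (linkSet (coreGraph Γ) {Q v}) := by
      intro c hc
      have hc' : (coreGraph Γ).Adj (Q v) c := hc (Q v) rfl
      obtain ⟨hne, a, b, ha, hb, hab⟩ := hc'
      have hav : starSet Γ a = starSet Γ v := Quotient.exact ha
      have hbv : b ≠ v := fun hbv => hne (by rw [← hb, hbv])
      have hvb : Γ.Adj v b := congr a v b hav hab hbv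
      have hbu : Γ.Adj b u := hlink b hvb
      have hcu : c ≠ Q u := by
        intro hcu
        exact hnotadj ⟨fun hvu => hne (hvu.trans hcu.symm),
          a, b, ha, by rw [hb, hcu], hab⟩
      exact ⟨hcu, b, u, hb, rfl, hbu⟩
    have := h (Q v)
    rw [this] at hsub
    have hstar : starSet Γ u = starSet Γ v := Quotient.exact hsub
    by_contra hne
    have : u ∈ starSet Γ u := Set.mem_insert _ _
    rw [hstar] at this
    rcases Set.mem_insert_iff.1 this with h1 | h2
    · exact hne h1
    · exact Γ.loopless.irrefl u (hlink u h2)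
  · rintro rfl
    intro x hx
    exact (hx u rfl).symm
end

section
/- For any simple graph Γ, the core of the core of Γ equals the core of Γ: in the core graph CΓ, any two vertices (i.e. core equivalence classes of Γ) whose stars in CΓ are equal must themselves be equal; equivalently, the core equivalence relation on CΓ is the identity relation. -/
lemma starSet_mem_iff {V : Type*} (G : SimpleGraph V) {v x : V} :
    x ∈ starSet G v ↔ x = v ∨ G.Adj v x := by
  simp [starSet, SimpleGraph.mem_neighborSet]

lemma star_eq_of_mk_eq {V : Type*} (Γ : SimpleGraph V) {v w : V}
    (h : Quotient.mk (coreSetoid Γ) v = Quotient.mk (coreSetoid Γ) w) :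
    starSet Γ v = starSet Γ w := Quotient.exact h

lemma mk_eq_of_star_eq {V : Type*} (Γ : SimpleGraph V) {v w : V}
    (h : starSet Γ v = starSet Γ w) :
    Quotient.mk (coreSetoid Γ) v = Quotient.mk (coreSetoid Γ) w := Quotient.sound h

/-- Adjacency in the core graph holds for *any* representatives. -/
lemma adj_reps {V : Type*} (Γ : SimpleGraph V) {v w : V}
    (h : (coreGraph Γ).Adj (Quotient.mk (coreSetoid Γ) v) (Quotient.mk (coreSetoid Γ) w)) :
    Γ.Adj v w := by
  obtain ⟨hne, v', w', hv, hw, hadj⟩ := h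
  have hv' : starSet Γ v' = starSet Γ v := star_eq_of_mk_eq Γ hv
  have hw' : starSet Γ w' = starSet Γ w := star_eq_of_mk_eq Γ hw
  have hneq : starSet Γ v ≠ starSet Γ w := fun he => hne (mk_eq_of_star_eq Γ he)
  -- Step 1: w' ∈ star v' = star v, so w' = v or Adj v w'.
  have hw'mem : w' ∈ starSet Γ v := by
    rw [← hv']; exact (starSet_mem_iff Γ).2 (Or.inr hadj)
  rcases (starSet_mem_iff Γ).1 hw'mem with he | hadj1
  · -- w' = v : then star v = star w' = star w, contradiction
    exact absurd ((congrArg (starSet Γ) he).symm.trans hw') hneq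
  · -- Adj v w'. Step 2: v ∈ star w' = star w, so v = w or Adj w v.
    have hvmem : v ∈ starSet Γ w := by
      rw [← hw']; exact (starSet_mem_iff Γ).2 (Or.inr hadj1.symm)
    rcases (starSet_mem_iff Γ).1 hvmem with he | hadj2
    · exact absurd (congrArg (starSet Γ) he) hneq
    · exact hadj2.symm

/-- If `v, w` are adjacent representatives of classes `c, d` and `Star(c) ⊆ Star(d)`
in the core graph, then `Star(v) ⊆ Star(w)` in `Γ`. -/
lemma coreStarSub {V : Type*} (Γ : SimpleGraph V) {v w : V}
    (hvw : Γ.Adj v w)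
    (hsub : starSet (coreGraph Γ) (Quotient.mk (coreSetoid Γ) v) ⊆
      starSet (coreGraph Γ) (Quotient.mk (coreSetoid Γ) w)) :
    starSet Γ v ⊆ starSet Γ w := by
  intro x hx
  rcases (starSet_mem_iff Γ).1 hx with he | hvx
  · subst he; exact (starSet_mem_iff Γ).2 (Or.inr hvw.symm)
  · by_cases hxw : starSet Γ x = starSet Γ w
    · -- w ∈ star w = star x, so w = x or Adj x w
      have : w ∈ starSet Γ x := by rw [hxw]; exact (starSet_mem_iff Γ).2 (Or.inl rfl)
      rcases (starSet_mem_iff Γ).1 this with he | hadj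
      · exact (starSet_mem_iff Γ).2 (Or.inl he.symm)
      · exact (starSet_mem_iff Γ).2 (Or.inr hadj.symm)
    · by_cases hxv : starSet Γ x = starSet Γ v
      · -- w ∈ star v = star x, so w = x or Adj x w
        have : w ∈ starSet Γ x := by
          rw [hxv]; exact (starSet_mem_iff Γ).2 (Or.inr hvw)
        rcases (starSet_mem_iff Γ).1 this with he | hadj
        · exact absurd (congrArg (starSet Γ) he.symm) hxw
        · exact (starSet_mem_iff Γ).2 (Or.inr hadj.symm)
      · -- class of x is distinct from both classes of v and w
        have hnev : Quotient.mk (coreSetoid Γ) v ≠ Quotient.mk (coreSetoid Γ) x :=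
          fun he => hxv (star_eq_of_mk_eq Γ he).symm
        have hAdj : (coreGraph Γ).Adj (Quotient.mk (coreSetoid Γ) v)
            (Quotient.mk (coreSetoid Γ) x) :=
          ⟨hnev, v, x, rfl, rfl, hvx⟩
        have hmem : Quotient.mk (coreSetoid Γ) x ∈
            starSet (coreGraph Γ) (Quotient.mk (coreSetoid Γ) w) :=
          hsub ((starSet_mem_iff _).2 (Or.inr hAdj))
        rcases (starSet_mem_iff _).1 hmem with he | hadj2
        · exact absurd (star_eq_of_mk_eq Γ he) hxw
        · exact (starSet_mem_iff Γ).2 (Or.inr (adj_reps Γ hadj2))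

/-- **The core of the core is the core.**  In the core graph `CΓ` of any simple graph
`Γ`, any two vertices with equal stars are equal; that is, the core equivalence
relation on `CΓ` is the identity relation. -/
theorem coreGraph_coreGraph {V : Type*} (Γ : SimpleGraph V)
    (c d : Quotient (coreSetoid Γ))
    (h : starSet (coreGraph Γ) c = starSet (coreGraph Γ) d) : c = d := by
  by_contra hne
  have hc : c ∈ starSet (coreGraph Γ) d := by
    rw [← h]; exact (starSet_mem_iff _).2 (Or.inl rfl)
  rcases (starSet_mem_iff _).1 hc with he | hadj
  · exact hne he
  · obtain ⟨hne', w, v, hw, hv, hadj'⟩ := hadj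
    subst hv; subst hw
    have hvw : Γ.Adj v w := hadj'.symm
    have h1 := coreStarSub Γ hvw (le_of_eq h)
    have h2 := coreStarSub Γ hvw.symm (le_of_eq h.symm)
    exact hne (mk_eq_of_star_eq Γ (Set.Subset.antisymm h1 h2))
end
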